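/- Let ψ be the characteristic exponent of a Lévy process with triple (a², ν, γ) and let β ∈ ℝ be such that ∫_{|x|>1} e^{|β||x|} ν(dx) < ∞. Then there exists c₃ < ∞ such that for all real α: ∫_{|x|≤1} |e^{i(α+iβ)x} − 1|² ν(dx) ≤ c₃ + 2 e^{|β|} |Re ψ(α)|. -/

import Mathlib

open MeasureTheory


lemma abs_exp_sub_one_le' (t : ℝ) : |Real.exp t - 1| ≤ |t| * Real.exp |t| := by
  have h2 : Real.exp |t| - 1 ≤ |t| * Real.exp |t| := by
    have h0 := Real.add_one_le_exp (-|t|)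
    rw [Real.exp_neg] at h0
    have hp := Real.exp_pos |t|
    have h6 : Real.exp |t| * (Real.exp |t|)⁻¹ = 1 := mul_inv_cancel₀ hp.ne'
    nlinarith [mul_le_mul_of_nonneg_left h0 hp.le]
  have h1 : |Real.exp t - 1| ≤ Real.exp |t| - 1 := by
    rcases le_or_gt 0 t with h | h
    · rw [abs_of_nonneg h]
      have : 1 ≤ Real.exp t := Real.one_le_exp h
      rw [abs_of_nonneg (by linarith)]
    · rw [abs_of_neg h]
      have h3 : Real.exp t ≤ 1 := Real.exp_le_one_iff.mpr h.le
      rw [abs_of_nonpos (by linarith), Real.exp_neg]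
      have h5 := Real.exp_pos t
      have h6 : Real.exp t * (Real.exp t)⁻¹ = 1 := mul_inv_cancel₀ h5.ne'
      have : 2 ≤ Real.exp t + (Real.exp t)⁻¹ := by
        nlinarith [sq_nonneg (Real.exp t - 1)]
      linarith
  linarith

lemma key (α β x : ℝ) :
    (‖Complex.exp (Complex.I * ((α : ℂ) + Complex.I * β) * x) - 1‖) ^ 2
      = (Real.exp (-(β*x)) - 1)^2 + 2 * Real.exp (-(β*x)) * (1 - Real.cos (α*x)) := by
  have h : Complex.I * ((α : ℂ) + Complex.I * β) * x
      = (↑(α*x)) * Complex.I + (↑(-(β*x)) : ℝ) := by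
    push_cast
    linear_combination (β*x : ℂ) * Complex.I_mul_I
  rw [h, Complex.exp_add, Complex.exp_mul_I,
    show Complex.exp ((↑(-(β*x)) : ℝ)) = ((Real.exp (-(β*x)) : ℝ) : ℂ) from
      (Complex.ofReal_exp _).symm,
    show Complex.cos ((↑(α*x) : ℝ)) = ((Real.cos (α*x) : ℝ) : ℂ) from
      (Complex.ofReal_cos _).symm,
    show Complex.sin ((↑(α*x) : ℝ)) = ((Real.sin (α*x) : ℝ) : ℂ) from
      (Complex.ofReal_sin _).symm,
    Complex.sq_norm, Complex.normSq_apply]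
  simp only [Complex.add_re, Complex.add_im, Complex.mul_re, Complex.mul_im, Complex.sub_re,
    Complex.sub_im, Complex.one_re, Complex.one_im, Complex.I_re, Complex.I_im,
    Complex.ofReal_re, Complex.ofReal_im]
  linear_combination (Real.exp (-(β*x)))^2 * Real.sin_sq_add_cos_sq (α*x)

/-- `∫_{|x|≤1} |e^{i(α+iβ)x} − 1|² ν(dx) ≤ c₃ + 2e^{|β|}|Re ψ(α)|`. -/
theorem stmt16 (a β : ℝ) (ν : Measure ℝ) (hν0 : ν {0} = 0)
    (hνint : Integrable (fun x => min (x ^ 2) 1) ν)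
    (hcos : ∀ u : ℝ, Integrable (fun x => Real.cos (u * x) - 1) ν)
    (hexp : Integrable (fun x => Real.exp (|β| * |x|)) (ν.restrict {x : ℝ | 1 < |x|}))
    (ψRe : ℝ → ℝ)
    (hψ : ∀ u : ℝ, ψRe u = -a ^ 2 * u ^ 2 / 2 + ∫ x, (Real.cos (u * x) - 1) ∂ν) :
    ∃ c₃ : ℝ, ∀ α : ℝ,
      (∫ x in {x : ℝ | |x| ≤ 1},
        (‖Complex.exp (Complex.I * ((α : ℂ) + Complex.I * β) * x) - 1‖) ^ 2 ∂ν)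
        ≤ c₃ + 2 * Real.exp |β| * |ψRe α| := by
  set S : Set ℝ := {x : ℝ | |x| ≤ 1} with hSdef
  have hS : MeasurableSet S := (isClosed_le continuous_abs continuous_const).measurableSet
  set C : ℝ := β ^ 2 * Real.exp (2 * |β|) with hCdef
  have hC : 0 ≤ C := by positivity
  refine ⟨C * ∫ x in S, min (x ^ 2) 1 ∂ν, fun α => ?_⟩
  set f : ℝ → ℝ := fun x =>
    (‖Complex.exp (Complex.I * ((α : ℂ) + Complex.I * β) * x) - 1‖) ^ 2 with hfdef
  set g : ℝ → ℝ := fun x =>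
    C * min (x ^ 2) 1 + 2 * Real.exp |β| * (1 - Real.cos (α * x)) with hgdef
  -- integrability of the pieces
  have hg1 : Integrable (fun x => C * min (x ^ 2) 1) (ν.restrict S) :=
    (hνint.restrict (s := S)).const_mul C
  have hg2ν : Integrable (fun x => 1 - Real.cos (α * x)) ν := by
    exact ((hcos α).neg).congr (Filter.Eventually.of_forall fun x => by simp [neg_sub])
  have hg2 : Integrable (fun x => 2 * Real.exp |β| * (1 - Real.cos (α * x))) (ν.restrict S) :=
    (hg2ν.restrict (s := S)).const_mul _
  have hgint : Integrable g (ν.restrict S) := hg1.add hg2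
  -- pointwise bound on S
  have hfg : ∀ x ∈ S, f x ≤ g x := by
    intro x hx
    have hx1 : |x| ≤ 1 := hx
    rw [hfdef, hgdef]
    simp only
    rw [key α β x]
    have hc1 : Real.cos (α * x) ≤ 1 := Real.cos_le_one _
    have hmin : min (x ^ 2) 1 = x ^ 2 := by
      rw [min_eq_left]
      nlinarith [abs_nonneg x, sq_abs x]
    have hb1 : (Real.exp (-(β * x)) - 1) ^ 2 ≤ C * min (x ^ 2) 1 := by
      have h1 : |Real.exp (-(β * x)) - 1| ≤ |(-(β * x))| * Real.exp |(-(β * x))| :=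
        abs_exp_sub_one_le' _
      have h2 : |(-(β * x))| ≤ |β| := by
        rw [abs_neg, abs_mul]
        calc |β| * |x| ≤ |β| * 1 := by
              exact mul_le_mul_of_nonneg_left hx1 (abs_nonneg β)
          _ = |β| := mul_one _
      have h3 : |(-(β * x))| * Real.exp |(-(β * x))| ≤ |β| * |x| * Real.exp |β| := by
        rw [abs_neg, abs_mul]
        have := Real.exp_le_exp.mpr h2
        rw [abs_neg, abs_mul] at this
        exact mul_le_mul_of_nonneg_left this (by positivity)
      have h4 : |Real.exp (-(β * x)) - 1| ≤ |β| * |x| * Real.exp |β| := h1.trans h3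
      have h5 : (Real.exp (-(β * x)) - 1) ^ 2 ≤ (|β| * |x| * Real.exp |β|) ^ 2 := by
        rw [← sq_abs (Real.exp (-(β * x)) - 1)]
        exact pow_le_pow_left₀ (abs_nonneg _) h4 2
      rw [hmin, hCdef]
      calc (Real.exp (-(β * x)) - 1) ^ 2 ≤ (|β| * |x| * Real.exp |β|) ^ 2 := h5
        _ = β ^ 2 * Real.exp (2 * |β|) * x ^ 2 := by
            rw [mul_pow, mul_pow, sq_abs, sq_abs,
              show Real.exp |β| ^ 2 = Real.exp (2 * |β|) by
                rw [two_mul, Real.exp_add]; ring]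
            ring
    have hb2 : 2 * Real.exp (-(β * x)) * (1 - Real.cos (α * x)) ≤
        2 * Real.exp |β| * (1 - Real.cos (α * x)) := by
      have he : Real.exp (-(β * x)) ≤ Real.exp |β| := by
        apply Real.exp_le_exp.mpr
        calc -(β * x) ≤ |β * x| := neg_le_abs _
          _ = |β| * |x| := abs_mul _ _
          _ ≤ |β| * 1 := mul_le_mul_of_nonneg_left hx1 (abs_nonneg β)
          _ = |β| := mul_one _
      nlinarith [Real.exp_pos (-(β * x)), Real.cos_le_one (α * x)]
    linarith
  -- f is integrable on S
  have hfmeas : AEStronglyMeasurable f (ν.restrict S) := by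
    apply Continuous.aestronglyMeasurable
    apply Continuous.pow
    apply continuous_norm.comp
    apply Continuous.sub _ continuous_const
    apply Complex.continuous_exp.comp
    exact continuous_const.mul Complex.continuous_ofReal
  have hfint : Integrable f (ν.restrict S) := by
    refine hgint.mono' hfmeas ?_
    rw [ae_restrict_iff' hS]
    filter_upwards with x hx
    rw [Real.norm_eq_abs, abs_of_nonneg (by positivity)]
    exact hfg x hx
  -- chain of inequalities
  have step1 : ∫ x in S, f x ∂ν ≤ ∫ x in S, g x ∂ν :=
    setIntegral_mono_on hfint hgint hS hfg
  have step2 : ∫ x in S, g x ∂ν =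
      C * (∫ x in S, min (x ^ 2) 1 ∂ν) +
        2 * Real.exp |β| * ∫ x in S, (1 - Real.cos (α * x)) ∂ν := by
    rw [hgdef]
    rw [integral_add hg1 hg2, integral_const_mul, integral_const_mul]
  have hnonneg : 0 ≤ᵐ[ν] fun x => 1 - Real.cos (α * x) := by
    filter_upwards with x
    simp [Real.cos_le_one]
  have step3 : ∫ x in S, (1 - Real.cos (α * x)) ∂ν ≤ ∫ x, (1 - Real.cos (α * x)) ∂ν :=
    setIntegral_le_integral hg2ν hnonneg
  have step4 : ∫ x, (1 - Real.cos (α * x)) ∂ν ≤ |ψRe α| := by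
    have h1 : ∫ x, (1 - Real.cos (α * x)) ∂ν = -∫ x, (Real.cos (α * x) - 1) ∂ν := by
      rw [← integral_neg]
      congr 1
      ext x
      ring
    have h2 : ∫ x, (Real.cos (α * x) - 1) ∂ν = ψRe α + a ^ 2 * α ^ 2 / 2 := by
      rw [hψ α]; ring
    rw [h1, h2]
    have h3 : -(ψRe α) ≤ |ψRe α| := neg_le_abs _
    have h4 : (0:ℝ) ≤ a ^ 2 * α ^ 2 / 2 := by positivity
    linarith
  calc ∫ x in S, f x ∂ν ≤ ∫ x in S, g x ∂ν := step1
    _ = C * (∫ x in S, min (x ^ 2) 1 ∂ν) +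
        2 * Real.exp |β| * ∫ x in S, (1 - Real.cos (α * x)) ∂ν := step2
    _ ≤ C * (∫ x in S, min (x ^ 2) 1 ∂ν) + 2 * Real.exp |β| * |ψRe α| := by
        have hE : (0:ℝ) ≤ 2 * Real.exp |β| := by positivity
        have := mul_le_mul_of_nonneg_left (step3.trans step4) hE
        linarith
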